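/- Fix ε > 0, an integer K, an integer N ≥ 1, a constant c_h > 0, and real numbers h_1, …, h_N with 0 < h_i ≤ c_h. Set τ₁ = τ₂ = ε, let L(λ) = (K/N)λ + (ε/2)λ² + (1/N) Σ_{i=1}^N ε ln(1 + exp((h_i − λ)/ε)) and L̃(λ) = (K/N)λ + (1/N) Σ_{i=1}^N max(h_i − λ, 0). Let λ* be a minimizer of L and λ̃* a minimizer of L̃ with 0 ≤ λ̃* ≤ 2c_h. Suppose there is a constant c₁ > 0 such that |λ − λ̃*| ≤ c₁ (L̃(λ) − L̃(λ̃*)) for all λ ∈ ℝ (a quadratic-growth/sharpness condition for L̃ at its minimizer). Then |λ* − λ̃*| ≤ c₁ ((ε/2)(λ̃*)² + ε ln 2 − (ε/2)(λ*)²) ≤ c₁ (2 c_h² + ln 2) ε. -/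
import Mathlib


open Finset

/-- The smoothed lower-level objective at temperatures `τ₁, τ₂`:
`L(λ) = (K/N)λ + (τ₂/2)λ² + (1/N) Σᵢ τ₁ ln(1 + exp((hᵢ − λ)/τ₁))`. -/
noncomputable def smoothedL (τ₁ τ₂ : ℝ) (K : ℤ) (N : ℕ) (h : Fin N → ℝ) (lam : ℝ) : ℝ :=
  ((K : ℝ) / N) * lam + (τ₂ / 2) * lam ^ 2 +
    (1 / N : ℝ) * ∑ i, τ₁ * Real.log (1 + Real.exp ((h i - lam) / τ₁))

/-- The unsmoothed, unregularized objective `L̃(λ) = (K/N)λ + (1/N) Σᵢ max(hᵢ − λ, 0)`. -/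
noncomputable def Ltilde (K : ℤ) (N : ℕ) (h : Fin N → ℝ) (lam : ℝ) : ℝ :=
  ((K : ℝ) / N) * lam + (1 / N : ℝ) * ∑ i, max (h i - lam) 0

lemma softplus_lower (ε x : ℝ) (hε : 0 < ε) :
    max x 0 ≤ ε * Real.log (1 + Real.exp (x / ε)) := by
  have h1 : Real.exp (x / ε) ≤ 1 + Real.exp (x / ε) := by linarith
  have hpos : (0:ℝ) < 1 + Real.exp (x / ε) := by positivity
  have hx : x / ε ≤ Real.log (1 + Real.exp (x / ε)) := by
    calc x / ε = Real.log (Real.exp (x / ε)) := (Real.log_exp _).symm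
    _ ≤ _ := Real.log_le_log (Real.exp_pos _) h1
  have h0 : (0:ℝ) ≤ Real.log (1 + Real.exp (x / ε)) := by
    have := Real.log_le_log one_pos (by linarith [Real.exp_pos (x / ε)] :
      (1:ℝ) ≤ 1 + Real.exp (x / ε))
    simpa using this
  rcases le_total x 0 with hx0 | hx0
  · rw [max_eq_right hx0]; positivity
  · rw [max_eq_left hx0]
    have := mul_le_mul_of_nonneg_left hx hε.le
    rwa [mul_div_cancel₀ _ hε.ne'] at this

lemma softplus_upper (ε x : ℝ) (hε : 0 < ε) :
    ε * Real.log (1 + Real.exp (x / ε)) ≤ max x 0 + ε * Real.log 2 := by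
  have hkey : 1 + Real.exp (x / ε) ≤ 2 * Real.exp (max x 0 / ε) := by
    have h1 : (1:ℝ) ≤ Real.exp (max x 0 / ε) := by
      apply Real.one_le_exp; positivity
    have h2 : Real.exp (x / ε) ≤ Real.exp (max x 0 / ε) :=
      Real.exp_le_exp.mpr (by gcongr; exact le_max_left _ _)
    linarith
  have hpos : (0:ℝ) < 1 + Real.exp (x / ε) := by positivity
  have hlog : Real.log (1 + Real.exp (x / ε)) ≤ Real.log 2 + max x 0 / ε := by
    calc Real.log (1 + Real.exp (x / ε)) ≤ Real.log (2 * Real.exp (max x 0 / ε)) :=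
          Real.log_le_log hpos hkey
    _ = Real.log 2 + max x 0 / ε := by
          rw [Real.log_mul (by norm_num) (Real.exp_pos _).ne', Real.log_exp]
  have := mul_le_mul_of_nonneg_left hlog hε.le
  rw [mul_add, mul_div_cancel₀ _ hε.ne'] at this
  linarith

lemma L_lower (ε : ℝ) (hε : 0 < ε) (K : ℤ) (N : ℕ) (h : Fin N → ℝ) (lam : ℝ) :
    Ltilde K N h lam + (ε / 2) * lam ^ 2 ≤ smoothedL ε ε K N h lam := by
  unfold Ltilde smoothedL
  have hsum : ∑ i, max (h i - lam) 0 ≤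
      ∑ i, ε * Real.log (1 + Real.exp ((h i - lam) / ε)) :=
    Finset.sum_le_sum fun i _ => softplus_lower ε _ hε
  have h1N : (0:ℝ) ≤ (1 / N : ℝ) := by positivity
  nlinarith [mul_le_mul_of_nonneg_left hsum h1N]

lemma L_upper (ε : ℝ) (hε : 0 < ε) (K : ℤ) (N : ℕ) (hN : 1 ≤ N) (h : Fin N → ℝ) (lam : ℝ) :
    smoothedL ε ε K N h lam ≤ Ltilde K N h lam + (ε / 2) * lam ^ 2 + ε * Real.log 2 := by
  unfold Ltilde smoothedL
  have hsum : ∑ i, ε * Real.log (1 + Real.exp ((h i - lam) / ε)) ≤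
      ∑ i, (max (h i - lam) 0 + ε * Real.log 2) :=
    Finset.sum_le_sum fun i _ => softplus_upper ε _ hε
  rw [Finset.sum_add_distrib, Finset.sum_const, Finset.card_univ, Fintype.card_fin,
    nsmul_eq_mul] at hsum
  have hNpos : (0:ℝ) < N := by exact_mod_cast hN
  have h1N : (0:ℝ) ≤ (1 / N : ℝ) := by positivity
  have := mul_le_mul_of_nonneg_left hsum h1N
  have hNe : (1 / N : ℝ) * ((N : ℝ) * (ε * Real.log 2)) = ε * Real.log 2 := by
    field_simp
  rw [mul_add, hNe] at this
  linarith

/-- with `τ₁ = τ₂ = ε`, a minimizer `λ*` of `L`, a minimizer `λ̃* ∈ [0, 2c_h]`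
of `L̃`, and the sharp-growth condition `|λ − λ̃*| ≤ c₁(L̃(λ) − L̃(λ̃*))`, one has
`|λ* − λ̃*| ≤ c₁((ε/2)(λ̃*)² + ε ln 2 − (ε/2)(λ*)²) ≤ c₁(2c_h² + ln 2)ε`. -/
theorem smoothed_minimizer_close
    (ε : ℝ) (hε : 0 < ε) (K : ℤ) (N : ℕ) (hN : 1 ≤ N)
    (c_h : ℝ) (hc : 0 < c_h) (h : Fin N → ℝ)
    (hh : ∀ i, 0 < h i ∧ h i ≤ c_h)
    (lamS lamT c₁ : ℝ) (hc₁ : 0 < c₁)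
    (hminS : ∀ μ : ℝ, smoothedL ε ε K N h lamS ≤ smoothedL ε ε K N h μ)
    (hminT : ∀ μ : ℝ, Ltilde K N h lamT ≤ Ltilde K N h μ)
    (hT0 : 0 ≤ lamT) (hT2 : lamT ≤ 2 * c_h)
    (hsharp : ∀ lam : ℝ, |lam - lamT| ≤ c₁ * (Ltilde K N h lam - Ltilde K N h lamT)) :
    |lamS - lamT| ≤ c₁ * ((ε / 2) * lamT ^ 2 + ε * Real.log 2 - (ε / 2) * lamS ^ 2) ∧
      c₁ * ((ε / 2) * lamT ^ 2 + ε * Real.log 2 - (ε / 2) * lamS ^ 2) ≤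
        c₁ * (2 * c_h ^ 2 + Real.log 2) * ε := by
  have h1 := L_lower ε hε K N h lamS
  have h2 := hminS lamT
  have h3 := L_upper ε hε K N hN h lamT
  have hgap : Ltilde K N h lamS - Ltilde K N h lamT ≤
      (ε / 2) * lamT ^ 2 + ε * Real.log 2 - (ε / 2) * lamS ^ 2 := by linarith
  constructor
  · exact le_trans (hsharp lamS) (by nlinarith)
  · have hTsq : lamT ^ 2 ≤ (2 * c_h) ^ 2 := by nlinarith
    have hT : (ε / 2) * lamT ^ 2 ≤ 2 * c_h ^ 2 * ε := by nlinarith [mul_le_mul_of_nonneg_left hTsq hε.le]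
    have hS : (0:ℝ) ≤ (ε / 2) * lamS ^ 2 := by positivity
    nlinarith
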